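/- arXiv:1906.09273 — 11 statements merged into one kernel-verified Lean document; each statement's English description precedes it below -/
import Mathlib

section
/- Let λ1 ≥ λ2 ≥ λ3 ≥ λ4 ≥ 0 be real numbers with λ1 + λ2 + λ3 + λ4 ≤ 1, and let C = max{0, λ1−λ2−λ3−λ4} and H = max{0, −D}. Then H ≥ C⁴, with equality when λ1 = C and λ2 = λ3 = λ4 = 0. -/
/-- With `λ1 ≥ λ2 ≥ λ3 ≥ λ4 ≥ 0`, `λ1+λ2+λ3+λ4 ≤ 1`,
`C = max{0, λ1−λ2−λ3−λ4}`, `H = max{0, −D}`: `H ≥ C⁴`, with equality when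
`λ1 = C` and `λ2 = λ3 = λ4 = 0`. -/
theorem harmony_ge_concurrence_pow_four (l1 l2 l3 l4 : ℝ)
    (h12 : l2 ≤ l1) (h23 : l3 ≤ l2) (h34 : l4 ≤ l3) (h4 : 0 ≤ l4)
    (hsum : l1 + l2 + l3 + l4 ≤ 1)
    (C D H : ℝ)
    (hC : C = max 0 (l1 - l2 - l3 - l4))
    (hD : D = (-l1 + l2 + l3 + l4) * (l1 - l2 + l3 + l4) * (l1 + l2 - l3 + l4)
      * (l1 + l2 + l3 - l4))
    (hH : H = max 0 (-D)) :
    C ^ 4 ≤ H ∧ (l1 = C ∧ l2 = 0 ∧ l3 = 0 ∧ l4 = 0 → H = C ^ 4) := by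
  constructor
  · rcases le_or_gt (l1 - l2 - l3 - l4) 0 with h | h
    · have hC0 : C = 0 := by rw [hC, max_eq_left h]
      have : (0:ℝ) ≤ H := by rw [hH]; exact le_max_left _ _
      simpa [hC0] using this
    · have hCe : C = l1 - l2 - l3 - l4 := by rw [hC, max_eq_right h.le]
      have h2 : C ≤ l1 - l2 + l3 + l4 := by rw [hCe]; linarith
      have h3 : C ≤ l1 + l2 - l3 + l4 := by rw [hCe]; linarith
      have h4' : C ≤ l1 + l2 + l3 - l4 := by rw [hCe]; linarith
      have hCpos : 0 < C := hCe ▸ h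
      have pa : 0 ≤ l1 - l2 - l3 - l4 := h.le
      have pb : 0 ≤ l1 - l2 + l3 + l4 := by linarith
      have pc : 0 ≤ l1 + l2 - l3 + l4 := by linarith
      have key : C ^ 4 ≤ -D := by
        rw [hD]
        have m1 := mul_le_mul hCe.le h2 hCpos.le pa
        have m2 := mul_le_mul m1 h3 hCpos.le (mul_nonneg pa pb)
        have m3 := mul_le_mul m2 h4' hCpos.le (mul_nonneg (mul_nonneg pa pb) pc)
        nlinarith [m3]
      calc C ^ 4 ≤ -D := key
        _ ≤ H := by rw [hH]; exact le_max_right _ _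
  · rintro ⟨h1, h2, h3, h4e⟩
    subst h2 h3 h4e
    have hl1 : 0 ≤ l1 := by linarith
    have hCe : C = l1 := by rw [hC]; simpa using hl1
    rw [hH, hD, hCe]
    have he : -((-l1 + 0 + 0 + 0) * (l1 - 0 + 0 + 0) * (l1 + 0 - 0 + 0)
        * (l1 + 0 + 0 - 0)) = l1 ^ 4 := by ring
    rw [he, max_eq_right (by positivity)]
end

section
/- Let λ1 ≥ λ2 ≥ λ3 ≥ λ4 ≥ 0 be real numbers with λ1 + λ2 + λ3 + λ4 ≤ 1, and let C = max{0, λ1−λ2−λ3−λ4} and H = max{0, −D}. Then H ≤ 1, and H = 1 if and only if C = 1 (equivalently, λ1 = 1 and λ2 = λ3 = λ4 = 0). -/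
/-- With `λ1 ≥ λ2 ≥ λ3 ≥ λ4 ≥ 0`, `λ1+λ2+λ3+λ4 ≤ 1`,
`C = max{0, λ1−λ2−λ3−λ4}`, `H = max{0, −D}`: `H ≤ 1`, and `H = 1 ↔ C = 1`
(equivalently, `λ1 = 1` and `λ2 = λ3 = λ4 = 0`). -/
theorem harmony_le_one (l1 l2 l3 l4 : ℝ)
    (h12 : l2 ≤ l1) (h23 : l3 ≤ l2) (h34 : l4 ≤ l3) (h4 : 0 ≤ l4)
    (hsum : l1 + l2 + l3 + l4 ≤ 1)
    (C D H : ℝ)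
    (hC : C = max 0 (l1 - l2 - l3 - l4))
    (hD : D = (-l1 + l2 + l3 + l4) * (l1 - l2 + l3 + l4) * (l1 + l2 - l3 + l4)
      * (l1 + l2 + l3 - l4))
    (hH : H = max 0 (-D)) :
    H ≤ 1 ∧ (H = 1 ↔ C = 1) ∧ (C = 1 ↔ l1 = 1 ∧ l2 = 0 ∧ l3 = 0 ∧ l4 = 0) := by
  have hkey : -D = (l1 - l2 - l3 - l4) * ((l1 - l2 + l3 + l4) * ((l1 + l2 - l3 + l4)
      * (l1 + l2 + l3 - l4))) := by rw [hD]; ring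
  set a := l1 - l2 - l3 - l4 with ha
  set b := l1 - l2 + l3 + l4 with hb
  set c := l1 + l2 - l3 + l4 with hc
  set d := l1 + l2 + l3 - l4 with hd
  have hb0 : 0 ≤ b := by simp only [hb]; linarith
  have hc0 : 0 ≤ c := by simp only [hc]; linarith
  have hd0 : 0 ≤ d := by simp only [hd]; linarith
  have ha1 : a ≤ 1 := by simp only [ha]; linarith
  have hb1 : b ≤ 1 := by simp only [hb]; linarith
  have hc1 : c ≤ 1 := by simp only [hc]; linarith
  have hd1 : d ≤ 1 := by simp only [hd]; linarith
  have hcd1 : c * d ≤ 1 := by nlinarith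
  have hbcd1 : b * (c * d) ≤ 1 := by nlinarith
  have hprod1 : a * (b * (c * d)) ≤ 1 := by
    rcases le_or_gt a 0 with h | h
    · nlinarith [mul_nonneg hc0 hd0, mul_nonneg hb0 (mul_nonneg hc0 hd0)]
    · nlinarith [mul_nonneg hb0 (mul_nonneg hc0 hd0)]
  have hHle : H ≤ 1 := by
    rw [hH, hkey]
    exact max_le (by norm_num) hprod1
  refine ⟨hHle, ?_, ?_⟩
  · constructor
    · intro h1
      have hmd : -D = 1 := by
        rcases max_cases (0:ℝ) (-D) with ⟨h, _⟩ | ⟨h, _⟩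
        · rw [hH, h] at h1; norm_num at h1
        · rw [hH, h] at h1; exact h1
      rw [hkey] at hmd
      have hbcd0 : 0 ≤ b * (c * d) := mul_nonneg hb0 (mul_nonneg hc0 hd0)
      have hbcd0 := hbcd0
      have ha0 : 0 < a := by
        by_contra h
        push_neg at h
        have : a * (b * (c * d)) ≤ 0 := mul_nonpos_of_nonpos_of_nonneg h hbcd0
        linarith
      have haeq : a = 1 := by
        have h5 : a * (b * (c * d)) ≤ a * 1 := mul_le_mul_of_nonneg_left hbcd1 ha0.le
        linarith
      have hbcd : b * (c * d) = 1 := by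
        rw [haeq, one_mul] at hmd; exact hmd
      have hbeq : b = 1 := by
        have h5 : b * (c * d) ≤ b * 1 := mul_le_mul_of_nonneg_left hcd1 hb0
        linarith
      have hcd : c * d = 1 := by rw [hbeq, one_mul] at hbcd; exact hbcd
      have hceq : c = 1 := by
        have h5 : c * d ≤ c * 1 := mul_le_mul_of_nonneg_left hd1 hc0
        linarith
      have hl3 : l3 = 0 := by simp only [ha, hb] at haeq hbeq; linarith
      have hl4 : l4 = 0 := by simp only [ha, hb] at haeq hbeq; linarith
      have hl2 : l2 = 0 := by simp only [ha, hc] at haeq hceq; linarith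
      have hl1 : l1 = 1 := by simp only [ha] at haeq; linarith
      rw [hC]; simp only [ha]; rw [hl1, hl2, hl3, hl4]
      norm_num
    · intro h1
      have hmx : (l1 - l2 - l3 - l4) = 1 := by
        rcases max_cases (0:ℝ) (l1 - l2 - l3 - l4) with ⟨h, _⟩ | ⟨h, _⟩
        · rw [hC, h] at h1; norm_num at h1
        · rw [hC, h] at h1; exact h1
      have hl2 : l2 = 0 := by linarith
      have hl3 : l3 = 0 := by linarith
      have hl4 : l4 = 0 := by linarith
      have hl1 : l1 = 1 := by linarith
      rw [hH, hkey]; simp only [ha, hb, hc, hd]; rw [hl1, hl2, hl3, hl4]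
      norm_num
  · constructor
    · intro h1
      have hmx : (l1 - l2 - l3 - l4) = 1 := by
        rcases max_cases (0:ℝ) (l1 - l2 - l3 - l4) with ⟨h, _⟩ | ⟨h, _⟩
        · rw [hC, h] at h1; norm_num at h1
        · rw [hC, h] at h1; exact h1
      refine ⟨by linarith, by linarith, by linarith, by linarith⟩
    · rintro ⟨hl1, hl2, hl3, hl4⟩
      rw [hC]; simp only [ha]; rw [hl1, hl2, hl3, hl4]
      norm_num
end

section
/- Let λ1 ≥ λ2 ≥ λ3 ≥ λ4 ≥ 0 be real numbers with λ1 + λ2 + λ3 + λ4 ≤ 1, and let C = max{0, λ1−λ2−λ3−λ4} and H = max{0, −D}. Then H ≤ C. -/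
/-- With `λ1 ≥ λ2 ≥ λ3 ≥ λ4 ≥ 0`, `λ1+λ2+λ3+λ4 ≤ 1`,
`C = max{0, λ1−λ2−λ3−λ4}`, `H = max{0, −D}`: `H ≤ C`. -/
theorem harmony_le_concurrence (l1 l2 l3 l4 : ℝ)
    (h12 : l2 ≤ l1) (h23 : l3 ≤ l2) (h34 : l4 ≤ l3) (h4 : 0 ≤ l4)
    (hsum : l1 + l2 + l3 + l4 ≤ 1)
    (C D H : ℝ)
    (hC : C = max 0 (l1 - l2 - l3 - l4))
    (hD : D = (-l1 + l2 + l3 + l4) * (l1 - l2 + l3 + l4) * (l1 + l2 - l3 + l4)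
      * (l1 + l2 + l3 - l4))
    (hH : H = max 0 (-D)) :
    H ≤ C := by
  subst hC hD hH
  have hA : (0:ℝ) ≤ l1 - l2 + l3 + l4 := by linarith
  have hB : (0:ℝ) ≤ l1 + l2 - l3 + l4 := by linarith
  have hE : (0:ℝ) ≤ l1 + l2 + l3 - l4 := by linarith
  have hA1 : l1 - l2 + l3 + l4 ≤ 1 := by linarith
  have hB1 : l1 + l2 - l3 + l4 ≤ 1 := by linarith
  have hE1 : l1 + l2 + l3 - l4 ≤ 1 := by linarith
  have hP : (l1 - l2 + l3 + l4) * (l1 + l2 - l3 + l4) * (l1 + l2 + l3 - l4) ≤ 1 := by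
    calc (l1 - l2 + l3 + l4) * (l1 + l2 - l3 + l4) * (l1 + l2 + l3 - l4)
        ≤ 1 * 1 * 1 := by
          gcongr
    _ = 1 := by norm_num
  have hP0 : (0:ℝ) ≤ (l1 - l2 + l3 + l4) * (l1 + l2 - l3 + l4) * (l1 + l2 + l3 - l4) :=
    mul_nonneg (mul_nonneg hA hB) hE
  apply max_le (le_max_left _ _)
  rcases le_or_gt (l1 - l2 - l3 - l4) 0 with h | h
  · have : 0 ≤ (-l1 + l2 + l3 + l4) * (l1 - l2 + l3 + l4) * (l1 + l2 - l3 + l4)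
      * (l1 + l2 + l3 - l4) := by
      apply mul_nonneg (mul_nonneg (mul_nonneg (by linarith) hA) hB) hE
    exact le_trans (by linarith) (le_max_left 0 (l1 - l2 - l3 - l4))
  · refine le_trans ?_ (le_max_right _ _)
    have := mul_le_mul_of_nonneg_left hP (le_of_lt h)
    nlinarith
end

section
/- Let ρ be a 4×4 positive semidefinite Hermitian complex matrix with trace 1, let ρ̃ = (σy⊗σy) ρ* (σy⊗σy), and suppose λ1, λ2, λ3, λ4 ≥ 0 are real numbers such that λ1², λ2², λ3², λ4² are the eigenvalues of ρ ρ̃ counted with multiplicity (i.e., the characteristic polynomial of ρ ρ̃ is ∏ᵢ(x − λᵢ²)). Then (−λ1+λ2+λ3+λ4)(λ1−λ2+λ3+λ4)(λ1+λ2−λ3+λ4)(λ1+λ2+λ3−λ4) = −2 tr[(ρ ρ̃)²] + (tr(ρ ρ̃))² + 8 det ρ. -/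
open Matrix Kronecker Complex ComplexOrder

/-- The Pauli matrix `σy`. -/
noncomputable def pauliY : Matrix (Fin 2) (Fin 2) ℂ := !![0, -Complex.I; Complex.I, 0]

/-- The spin-flip matrix `σy ⊗ σy` (Kronecker product). -/
noncomputable def sigYY : Matrix (Fin 2 × Fin 2) (Fin 2 × Fin 2) ℂ := pauliY ⊗ₖ pauliY

/-- The spin-flipped matrix `ρ̃ = (σy⊗σy) ρ* (σy⊗σy)`, with `ρ*` the entrywise
complex conjugate of `ρ`. -/
noncomputable def spinFlip (ρ : Matrix (Fin 2 × Fin 2) (Fin 2 × Fin 2) ℂ) :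
    Matrix (Fin 2 × Fin 2) (Fin 2 × Fin 2) ℂ :=
  sigYY * ρ.map (starRingEnd ℂ) * sigYY

/-- The harmony `H(ρ) = max{0, 2 tr[(ρρ̃)²] − (tr(ρρ̃))² − 8 det ρ}` (for a density
matrix `ρ` all the quantities involved are real, so we take real parts). -/
noncomputable def harmony (ρ : Matrix (Fin 2 × Fin 2) (Fin 2 × Fin 2) ℂ) : ℝ :=
  max 0 (2 * ((ρ * spinFlip ρ * (ρ * spinFlip ρ)).trace).re
    - ((ρ * spinFlip ρ).trace.re) ^ 2 - 8 * ρ.det.re)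

open Polynomial in
lemma charpoly_eval' {n : Type*} [Fintype n] [DecidableEq n] {R : Type*} [CommRing R]
    (A : Matrix n n R) (r : R) : A.charpoly.eval r = (r • (1 : Matrix n n R) - A).det := by
  rw [Matrix.charpoly, _root_.eval_det, matPolyEquiv_charmatrix]
  simp [Matrix.scalar_apply, Matrix.smul_one_eq_diagonal]

open Polynomial in
lemma quartic_roots (a b c d : ℂ) :
    ((X - C a) * (X - C b) * (X - C c) * (X - C d)).roots = {a, b, c, d} := by
  rw [roots_mul (by apply_rules [mul_ne_zero, X_sub_C_ne_zero]),
      roots_mul (by apply_rules [mul_ne_zero, X_sub_C_ne_zero]),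
      roots_mul (by apply_rules [mul_ne_zero, X_sub_C_ne_zero])]
  simp [roots_X_sub_C]

open Polynomial in
lemma quartic_trace_det {n : Type*} [Fintype n] [DecidableEq n]
    (A : Matrix n n ℂ) (a b c d : ℂ)
    (h : A.charpoly = (X - C a) * (X - C b) * (X - C c) * (X - C d)) :
    A.trace = a + b + c + d ∧ A.det = a * b * c * d := by
  constructor
  · rw [Matrix.trace_eq_sum_roots_charpoly, h, quartic_roots]
    simp; ring
  · rw [Matrix.det_eq_prod_roots_charpoly, h, quartic_roots]
    simp; ring

open Polynomial in
lemma charpoly_sq (M : Matrix (Fin 2 × Fin 2) (Fin 2 × Fin 2) ℂ) (a b c d : ℂ)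
    (h : M.charpoly = (X - C a) * (X - C b) * (X - C c) * (X - C d)) :
    (M * M).charpoly =
      (X - C (a^2)) * (X - C (b^2)) * (X - C (c^2)) * (X - C (d^2)) := by
  apply Polynomial.funext
  intro s
  obtain ⟨t, ht⟩ : ∃ t : ℂ, t ^ 2 = s := ⟨_, Complex.cpow_nat_inv_pow s two_ne_zero⟩
  have hfac : s • (1 : Matrix (Fin 2 × Fin 2) (Fin 2 × Fin 2) ℂ) - M * M
      = (t • 1 - M) * (t • 1 + M) := by
    rw [← ht]
    simp only [sub_mul, mul_add, smul_mul_assoc, Matrix.mul_smul, one_mul, mul_one, smul_smul]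
    rw [pow_two]
    abel
  have hneg : (t • (1 : Matrix (Fin 2 × Fin 2) (Fin 2 × Fin 2) ℂ) + M).det
      = ((-t) • 1 - M).det := by
    have : t • (1 : Matrix (Fin 2 × Fin 2) (Fin 2 × Fin 2) ℂ) + M
        = -((-t) • 1 - M) := by simp; exact add_comm _ _
    rw [this, Matrix.det_neg]
    norm_num
  rw [charpoly_eval', hfac, Matrix.det_mul, hneg, ← charpoly_eval', ← charpoly_eval', h]
  simp only [eval_mul, eval_sub, eval_X, eval_C]
  rw [← ht]; ring

open Polynomial in
/-- For a 2-qubit density matrix `ρ` whose matrix `ρρ̃` has eigenvalues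
`λ1², λ2², λ3², λ4²` (with all `λᵢ ≥ 0`), counted with multiplicity via the
characteristic polynomial, the disharmony expressed in terms of the `λᵢ` equals
`−2 tr[(ρρ̃)²] + (tr(ρρ̃))² + 8 det ρ`. -/
theorem disharmony_eq_trace_formula (ρ : Matrix (Fin 2 × Fin 2) (Fin 2 × Fin 2) ℂ)
    (hpsd : ρ.PosSemidef) (htr : ρ.trace = 1)
    (l1 l2 l3 l4 : ℝ) (h1 : 0 ≤ l1) (h2 : 0 ≤ l2) (h3 : 0 ≤ l3) (h4 : 0 ≤ l4)
    (heig : (ρ * spinFlip ρ).charpoly =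
      (X - C ((l1 : ℂ) ^ 2)) * (X - C ((l2 : ℂ) ^ 2)) * (X - C ((l3 : ℂ) ^ 2))
        * (X - C ((l4 : ℂ) ^ 2))) :
    (((-l1 + l2 + l3 + l4) * (l1 - l2 + l3 + l4) * (l1 + l2 - l3 + l4)
        * (l1 + l2 + l3 - l4) : ℝ) : ℂ)
      = -2 * (ρ * spinFlip ρ * (ρ * spinFlip ρ)).trace
        + (ρ * spinFlip ρ).trace ^ 2 + 8 * ρ.det := by
  obtain ⟨htrM, hdetM⟩ := quartic_trace_det _ _ _ _ _ heig
  obtain ⟨htrM2, -⟩ := quartic_trace_det _ _ _ _ _ (charpoly_sq _ _ _ _ _ heig)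
  set r : ℝ := ∏ i, hpsd.1.eigenvalues i with hr
  have hrnn : 0 ≤ r := Finset.prod_nonneg fun i _ => hpsd.eigenvalues_nonneg i
  have hdetρ : ρ.det = (r : ℂ) := by
    rw [hpsd.1.det_eq_prod_eigenvalues, hr]
    norm_cast
  have hsig : sigYY.det = 1 := by
    rw [sigYY, Matrix.det_kronecker]
    norm_num [pauliY, Matrix.det_fin_two_of]
  have hflip : (spinFlip ρ).det = (r : ℂ) := by
    rw [spinFlip, Matrix.det_mul, Matrix.det_mul, hsig, ← RingHom.mapMatrix_apply, ← RingHom.map_det, hdetρ]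
    simp
  have hprod : l1 * l2 * l3 * l4 = r := by
    have h0 : (ρ * spinFlip ρ).det = (r : ℂ) ^ 2 := by
      rw [Matrix.det_mul, hdetρ, hflip, sq]
    rw [hdetM] at h0
    have h0' : (l1 * l2 * l3 * l4) ^ 2 = r ^ 2 := by
      exact_mod_cast (by push_cast at h0 ⊢; linear_combination h0 :
        (((l1 * l2 * l3 * l4) ^ 2 : ℝ) : ℂ) = ((r ^ 2 : ℝ) : ℂ))
    nlinarith [mul_nonneg (mul_nonneg (mul_nonneg h1 h2) h3) h4]
  rw [htrM2, htrM, hdetρ, ← hprod]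
  push_cast
  ring
end

section
/- Let ψ = (a, c, d, b) ∈ ℂ⁴ be a unit vector representing the pure 2-qubit state a|00⟩ + c|01⟩ + d|10⟩ + b|11⟩, and let ψ̃ = (σy⊗σy) ψ*. Then ⟨ψ̃, ψ⟩ = 2(cd − ab), and the 2×2 reduced density matrix ρ_A with entries (ρ_A)₁₁ = |a|²+|c|², (ρ_A)₁₂ = a d̄ + c b̄, (ρ_A)₂₁ = d ā + b c̄, (ρ_A)₂₂ = |d|²+|b|² satisfies 4 det ρ_A = |⟨ψ̃, ψ⟩|². -/
open Matrix Kronecker Complex ComplexOrder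

/-- For the pure 2-qubit state `ψ = a|00⟩ + c|01⟩ + d|10⟩ + b|11⟩`
(a unit vector), with `ψ̃ = (σy⊗σy) ψ*`, one has `⟨ψ̃, ψ⟩ = 2(cd − ab)`, and the
reduced density matrix `ρ_A` satisfies `4 det ρ_A = |⟨ψ̃, ψ⟩|²`. -/
theorem inner_spinFlip_and_det_reduced (a b c d : ℂ)
    (hunit : Complex.normSq a + Complex.normSq b + Complex.normSq c
      + Complex.normSq d = 1)
    (ψ : Fin 2 × Fin 2 → ℂ) (hψ : ψ = fun p => !![a, c; d, b] p.1 p.2)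
    (ψt : Fin 2 × Fin 2 → ℂ) (hψt : ψt = sigYY.mulVec (star ψ))
    (ip : ℂ) (hip : ip = ∑ p, star (ψt p) * ψ p)
    (ρA : Matrix (Fin 2) (Fin 2) ℂ)
    (hρA : ρA = !![((‖a‖ ^ 2 + ‖c‖ ^ 2 : ℝ) : ℂ),
                    a * star d + c * star b;
                    d * star a + b * star c,
                    ((‖d‖ ^ 2 + ‖b‖ ^ 2 : ℝ) : ℂ)]) :
    ip = 2 * (c * d - a * b) ∧ 4 * ρA.det = ((‖ip‖ : ℝ) ^ 2 : ℂ) := by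
  have hip2 : ip = 2 * (c * d - a * b) := by
    subst hψ hψt hip
    simp [sigYY, pauliY, Matrix.mulVec, dotProduct, Fintype.sum_prod_type,
      Fin.sum_univ_succ, Matrix.kroneckerMap_apply, Matrix.mul_fin_two,
      Pi.star_apply, Matrix.cons_val_zero, Matrix.cons_val_one, Matrix.head_cons,
      mul_comm, mul_assoc, mul_left_comm]
    ring
  refine ⟨hip2, ?_⟩
  have key : ∀ z : ℂ, ((‖z‖ : ℝ) : ℂ) ^ 2 = z * star z := by
    intro z
    rw [← Complex.ofReal_pow, Complex.sq_norm, ← Complex.mul_conj]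
    rfl
  subst hρA
  rw [hip2]
  simp only [Matrix.det_fin_two_of]
  push_cast
  simp only [key]
  simp only [star_mul', star_sub, StarMul.star_mul, star_ofNat]
  ring
end

section
/- Let ψ = (a, c, d, b) ∈ ℂ⁴ be a unit vector representing the pure 2-qubit state a|00⟩ + c|01⟩ + d|10⟩ + b|11⟩, let ψ̃ = (σy⊗σy) ψ*, and let ρ_A be the 2×2 reduced density matrix with entries (ρ_A)₁₁ = |a|²+|c|², (ρ_A)₁₂ = a d̄ + c b̄, (ρ_A)₂₁ = d ā + b c̄, (ρ_A)₂₂ = |d|²+|b|². Then the purity satisfies tr(ρ_A²) = 1 − (1/2)|⟨ψ̃, ψ⟩|². -/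
open Matrix Kronecker Complex ComplexOrder

/-- For the pure 2-qubit state `ψ = a|00⟩ + c|01⟩ + d|10⟩ + b|11⟩`
(a unit vector), with `ψ̃ = (σy⊗σy) ψ*` and reduced density matrix `ρ_A`, the
purity satisfies `tr(ρ_A²) = 1 − (1/2)|⟨ψ̃, ψ⟩|²`. -/
theorem purity_of_reduced_state (a b c d : ℂ)
    (hunit : Complex.normSq a + Complex.normSq b + Complex.normSq c
      + Complex.normSq d = 1)
    (ψ : Fin 2 × Fin 2 → ℂ) (hψ : ψ = fun p => !![a, c; d, b] p.1 p.2)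
    (ψt : Fin 2 × Fin 2 → ℂ) (hψt : ψt = sigYY.mulVec (star ψ))
    (ip : ℂ) (hip : ip = ∑ p, star (ψt p) * ψ p)
    (ρA : Matrix (Fin 2) (Fin 2) ℂ)
    (hρA : ρA = !![((‖a‖ ^ 2 + ‖c‖ ^ 2 : ℝ) : ℂ),
                    a * star d + c * star b;
                    d * star a + b * star c,
                    ((‖d‖ ^ 2 + ‖b‖ ^ 2 : ℝ) : ℂ)]) :
    (ρA * ρA).trace = ((1 - (1 / 2) * (‖ip‖ : ℝ) ^ 2 : ℝ) : ℂ) := by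
  subst hψ hψt hρA
  have hip2 : ip = 2 * (c * d - a * b) := by
    rw [hip]
    simp [sigYY, pauliY, Matrix.mulVec, dotProduct, kroneckerMap,
      Fintype.sum_prod_type, Fin.sum_univ_succ, Matrix.cons_val_zero,
      Matrix.cons_val_one]
    ring
  have habs : ((‖ip‖ ^ 2 : ℝ) : ℂ) = star ip * ip := by
    rw [Complex.sq_norm, Complex.normSq_eq_conj_mul_self]; rfl
  have hab : ∀ z : ℂ, ((‖z‖ ^ 2 : ℝ) : ℂ) = star z * z := fun z => by
    rw [Complex.sq_norm, Complex.normSq_eq_conj_mul_self]; rfl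
  have hu : (star a * a) + (star b * b) + (star c * c) + (star d * d) = 1 := by
    have := congrArg (Complex.ofReal) hunit
    push_cast at this
    simpa [Complex.normSq_eq_conj_mul_self] using this
  rw [Matrix.mul_fin_two, Matrix.trace_fin_two_of]
  push_cast [hab, hip2, star_sub, mul_comm, StarMul.star_mul, star_ofNat]
  linear_combination (star a * a + star b * b + star c * c + star d * d + 1) * hu
end

section
/- Let ρ be a 4×4 positive semidefinite Hermitian complex matrix with trace 1, and let U_A and U_B be unitary 2×2 complex matrices. Define ρ' = (U_A⊗U_B) ρ (U_A⊗U_B)†. Then the harmony is invariant: max{0, 2 tr[(ρ'ρ̃')²] − (tr(ρ'ρ̃'))² − 8 det ρ'} = max{0, 2 tr[(ρρ̃)²] − (tr(ρρ̃))² − 8 det ρ}, where ρ̃ = (σy⊗σy) ρ* (σy⊗σy) and ρ̃' = (σy⊗σy) ρ'* (σy⊗σy). -/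
open Matrix Kronecker Complex ComplexOrder

lemma pauliY_mul_pauliY : pauliY * pauliY = 1 := by
  ext i j
  fin_cases i <;> fin_cases j <;>
    simp [pauliY, Matrix.mul_apply, Fin.sum_univ_two, Matrix.one_apply]

lemma pauliY_conj (A : Matrix (Fin 2) (Fin 2) ℂ) :
    pauliY * A * pauliY = (A.adjugate)ᵀ := by
  ext i j
  fin_cases i <;> fin_cases j <;>
    simp [pauliY, Matrix.mul_apply, Fin.sum_univ_two, Matrix.adjugate_fin_two,
      Matrix.vecMul, dotProduct] <;> ring_nf <;> simp [Complex.I_sq]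

lemma adjugate_of_unitary {U : Matrix (Fin 2) (Fin 2) ℂ}
    (hU : U ∈ Matrix.unitaryGroup (Fin 2) ℂ) :
    U.adjugate = U.det • Uᴴ := by
  have h1 : U * Uᴴ = 1 := (Matrix.mem_unitaryGroup_iff).mp hU
  calc U.adjugate = U.adjugate * (U * Uᴴ) := by rw [h1, mul_one]
    _ = (U.adjugate * U) * Uᴴ := by rw [mul_assoc]
    _ = U.det • Uᴴ := by rw [Matrix.adjugate_mul, Matrix.smul_mul, one_mul]

lemma pauliY_flip_unitary {U : Matrix (Fin 2) (Fin 2) ℂ}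
    (hU : U ∈ Matrix.unitaryGroup (Fin 2) ℂ) :
    pauliY * U.map (starRingEnd ℂ) * pauliY = (starRingEnd ℂ U.det) • U := by
  rw [pauliY_conj]
  have := (starRingEnd ℂ).map_adjugate U
  simp only [RingHom.mapMatrix_apply] at this
  rw [← this, adjugate_of_unitary hU]
  ext i j
  simp [Matrix.conjTranspose_apply, Matrix.transpose_apply, mul_comm]

lemma sigYY_mul_sigYY : sigYY * sigYY = 1 := by
  rw [sigYY, ← Matrix.mul_kronecker_mul, pauliY_mul_pauliY, Matrix.one_kronecker_one]

lemma map_conj_kronecker (A B : Matrix (Fin 2) (Fin 2) ℂ) :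
    (A ⊗ₖ B).map (starRingEnd ℂ) = (A.map (starRingEnd ℂ)) ⊗ₖ (B.map (starRingEnd ℂ)) := by
  ext ⟨i, j⟩ ⟨k, l⟩
  simp [Matrix.kroneckerMap_apply, Matrix.map_apply]

lemma spinFlip_conj (ρ : Matrix (Fin 2 × Fin 2) (Fin 2 × Fin 2) ℂ)
    (UA UB : Matrix (Fin 2) (Fin 2) ℂ)
    (hUA : UA ∈ Matrix.unitaryGroup (Fin 2) ℂ)
    (hUB : UB ∈ Matrix.unitaryGroup (Fin 2) ℂ) :
    spinFlip ((UA ⊗ₖ UB) * ρ * (UA ⊗ₖ UB)ᴴ) =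
      (UA ⊗ₖ UB) * spinFlip ρ * (UA ⊗ₖ UB)ᴴ := by
  set U := UA ⊗ₖ UB with hUdef
  have hmap : (U * ρ * Uᴴ).map (starRingEnd ℂ)
      = U.map (starRingEnd ℂ) * ρ.map (starRingEnd ℂ) * (Uᴴ).map (starRingEnd ℂ) := by
    simp [Matrix.map_mul]
  have hσU : sigYY * U.map (starRingEnd ℂ) * sigYY
      = (starRingEnd ℂ (UA.det * UB.det)) • U := by
    rw [hUdef, map_conj_kronecker, sigYY, ← Matrix.mul_kronecker_mul,
      ← Matrix.mul_kronecker_mul, pauliY_flip_unitary hUA, pauliY_flip_unitary hUB]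
    rw [Matrix.smul_kronecker, Matrix.kronecker_smul, smul_smul, _root_.map_mul]
  have hσUc : sigYY * (Uᴴ).map (starRingEnd ℂ) * sigYY
      = (UA.det * UB.det) • Uᴴ := by
    have hUAc : UAᴴ ∈ Matrix.unitaryGroup (Fin 2) ℂ := Unitary.star_mem hUA
    have hUBc : UBᴴ ∈ Matrix.unitaryGroup (Fin 2) ℂ := Unitary.star_mem hUB
    have hk : (Uᴴ) = UAᴴ ⊗ₖ UBᴴ := by
      rw [hUdef]
      ext ⟨i, j⟩ ⟨k, l⟩
      simp [Matrix.conjTranspose_apply, Matrix.kroneckerMap_apply]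
    rw [hk, map_conj_kronecker, sigYY, ← Matrix.mul_kronecker_mul,
      ← Matrix.mul_kronecker_mul, pauliY_flip_unitary hUAc, pauliY_flip_unitary hUBc]
    rw [Matrix.smul_kronecker, Matrix.kronecker_smul, smul_smul, ← hk]
    simp [Matrix.det_conjTranspose]
  have hdetu : (starRingEnd ℂ (UA.det * UB.det)) * (UA.det * UB.det) = 1 := by
    have h1 : (starRingEnd ℂ UA.det) * UA.det = 1 := by
      have := (Unitary.mem_iff.mp (Matrix.det_of_mem_unitary hUA)).1
      simpa using this
    have h2 : (starRingEnd ℂ UB.det) * UB.det = 1 := by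
      have := (Unitary.mem_iff.mp (Matrix.det_of_mem_unitary hUB)).1
      simpa using this
    rw [_root_.map_mul]
    calc (starRingEnd ℂ) UA.det * (starRingEnd ℂ) UB.det * (UA.det * UB.det)
        = ((starRingEnd ℂ) UA.det * UA.det) * ((starRingEnd ℂ) UB.det * UB.det) := by ring
      _ = 1 := by rw [h1, h2, mul_one]
  calc spinFlip (U * ρ * Uᴴ)
      = sigYY * (U.map (starRingEnd ℂ) * ρ.map (starRingEnd ℂ)
          * (Uᴴ).map (starRingEnd ℂ)) * sigYY := by rw [spinFlip, hmap]
    _ = (sigYY * U.map (starRingEnd ℂ) * sigYY) * (sigYY * ρ.map (starRingEnd ℂ) * sigYY)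
          * (sigYY * (Uᴴ).map (starRingEnd ℂ) * sigYY) := by
        have h := sigYY_mul_sigYY
        calc sigYY * (U.map (starRingEnd ℂ) * ρ.map (starRingEnd ℂ)
              * (Uᴴ).map (starRingEnd ℂ)) * sigYY
            = sigYY * U.map (starRingEnd ℂ) * (sigYY * sigYY) * ρ.map (starRingEnd ℂ)
              * (sigYY * sigYY) * (Uᴴ).map (starRingEnd ℂ) * sigYY := by
              rw [h]; noncomm_ring
          _ = _ := by noncomm_ring
    _ = ((starRingEnd ℂ (UA.det * UB.det)) • U) * spinFlip ρ
          * ((UA.det * UB.det) • Uᴴ) := by rw [hσU, hσUc, spinFlip]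
    _ = ((starRingEnd ℂ (UA.det * UB.det)) * (UA.det * UB.det)) • (U * spinFlip ρ * Uᴴ) := by
        rw [Matrix.smul_mul, Matrix.smul_mul, Matrix.mul_smul, smul_smul, mul_comm]
    _ = U * spinFlip ρ * Uᴴ := by rw [hdetu, one_smul]

/-- The harmony is invariant under local unitary transformations
`ρ ↦ (U_A⊗U_B) ρ (U_A⊗U_B)†`. -/
theorem harmony_local_unitary_invariant (ρ : Matrix (Fin 2 × Fin 2) (Fin 2 × Fin 2) ℂ)
    (hpsd : ρ.PosSemidef) (htr : ρ.trace = 1)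
    (UA UB : Matrix (Fin 2) (Fin 2) ℂ)
    (hUA : UA ∈ Matrix.unitaryGroup (Fin 2) ℂ)
    (hUB : UB ∈ Matrix.unitaryGroup (Fin 2) ℂ) :
    harmony ((UA ⊗ₖ UB) * ρ * (UA ⊗ₖ UB)ᴴ) = harmony ρ := by
  set U := UA ⊗ₖ UB with hUdef
  have hUunit : Uᴴ * U = 1 := by
    rw [hUdef]
    have hk : (UA ⊗ₖ UB)ᴴ = UAᴴ ⊗ₖ UBᴴ := by
      ext ⟨i, j⟩ ⟨k, l⟩
      simp [Matrix.conjTranspose_apply, Matrix.kroneckerMap_apply]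
    rw [hk, ← Matrix.mul_kronecker_mul,
      ← Matrix.star_eq_conjTranspose UA, ← Matrix.star_eq_conjTranspose UB,
      (Matrix.mem_unitaryGroup_iff').mp hUA, (Matrix.mem_unitaryGroup_iff').mp hUB,
      Matrix.one_kronecker_one]
  have hflip := spinFlip_conj ρ UA UB hUA hUB
  rw [← hUdef] at hflip
  have hprod : (U * ρ * Uᴴ) * spinFlip (U * ρ * Uᴴ) = U * (ρ * spinFlip ρ) * Uᴴ := by
    rw [hflip]
    calc U * ρ * Uᴴ * (U * spinFlip ρ * Uᴴ)
        = U * ρ * (Uᴴ * U) * spinFlip ρ * Uᴴ := by noncomm_ring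
      _ = U * (ρ * spinFlip ρ) * Uᴴ := by rw [hUunit]; noncomm_ring
  have htr1 : ((U * ρ * Uᴴ) * spinFlip (U * ρ * Uᴴ)).trace = (ρ * spinFlip ρ).trace := by
    rw [hprod, Matrix.trace_mul_cycle, ← mul_assoc, hUunit, one_mul]
  have htr2 : ((U * ρ * Uᴴ) * spinFlip (U * ρ * Uᴴ)
      * ((U * ρ * Uᴴ) * spinFlip (U * ρ * Uᴴ))).trace
      = (ρ * spinFlip ρ * (ρ * spinFlip ρ)).trace := by
    rw [hprod]
    have : U * (ρ * spinFlip ρ) * Uᴴ * (U * (ρ * spinFlip ρ) * Uᴴ)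
        = U * (ρ * spinFlip ρ * (ρ * spinFlip ρ)) * Uᴴ := by
      calc U * (ρ * spinFlip ρ) * Uᴴ * (U * (ρ * spinFlip ρ) * Uᴴ)
          = U * (ρ * spinFlip ρ) * (Uᴴ * U) * (ρ * spinFlip ρ) * Uᴴ := by noncomm_ring
        _ = _ := by rw [hUunit]; noncomm_ring
    rw [this, Matrix.trace_mul_cycle, ← mul_assoc, hUunit, one_mul]
  have hdet : (U * ρ * Uᴴ).det = ρ.det := by
    rw [Matrix.det_mul, Matrix.det_mul]
    have : Uᴴ.det * U.det = 1 := by rw [← Matrix.det_mul, hUunit, Matrix.det_one]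
    calc U.det * ρ.det * Uᴴ.det = (Uᴴ.det * U.det) * ρ.det := by ring
      _ = ρ.det := by rw [this, one_mul]
  rw [harmony, harmony, htr1, htr2, hdet]
end

section
/- Fix a real number x with 0 ≤ x ≤ 1. In the basis {|00⟩, |01⟩, |10⟩, |11⟩}, define the 4×4 density matrices ρ₊ and ρ₋ whose only nonzero entries are the (|00⟩,|00⟩) entry (1±x)/2, the (|11⟩,|11⟩) entry (1∓x)/2, and the (|00⟩,|11⟩) and (|11⟩,|00⟩) entries √(1−x²)/2; and let ρ = (1/2)ρ₊ + (1/2)ρ₋. Then H(ρ₊) = H(ρ₋) = (1−x²)² and H(ρ) = 1−x², so that H(ρ) ≥ (1/2)H(ρ₊) + (1/2)H(ρ₋), with strict inequality for 0 < x < 1; hence the harmony is not a convex function of the density matrix. -/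
open Matrix Kronecker Complex ComplexOrder

/-- The density matrix with `(|00⟩,|00⟩)` entry `p`, `(|11⟩,|11⟩)` entry `1 − p`
(here `p = (1±x)/2`), and `(|00⟩,|11⟩)`, `(|11⟩,|00⟩)` entries `√(1−x²)/2`. -/
noncomputable def rhoPM (x : ℝ) (p : ℝ) : Matrix (Fin 2 × Fin 2) (Fin 2 × Fin 2) ℂ :=
  Matrix.of fun i j =>
    if i = (0, 0) ∧ j = (0, 0) then ((p : ℝ) : ℂ)
    else if i = (1, 1) ∧ j = (1, 1) then ((1 - p : ℝ) : ℂ)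
    else if (i = (0, 0) ∧ j = (1, 1)) ∨ (i = (1, 1) ∧ j = (0, 0)) then
      ((Real.sqrt (1 - x ^ 2) / 2 : ℝ) : ℂ)
    else 0

noncomputable def Kmat (x p : ℝ) : Matrix (Fin 2 × Fin 2) (Fin 2 × Fin 2) ℂ :=
  Matrix.of fun i j =>
    if i = (0, 0) ∧ j = (0, 0) then ((p * (1 - p) + (Real.sqrt (1 - x ^ 2) / 2) ^ 2 : ℝ) : ℂ)
    else if i = (1, 1) ∧ j = (1, 1) then ((p * (1 - p) + (Real.sqrt (1 - x ^ 2) / 2) ^ 2 : ℝ) : ℂ)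
    else if i = (0, 0) ∧ j = (1, 1) then ((2 * p * (Real.sqrt (1 - x ^ 2) / 2) : ℝ) : ℂ)
    else if i = (1, 1) ∧ j = (0, 0) then ((2 * (1 - p) * (Real.sqrt (1 - x ^ 2) / 2) : ℝ) : ℂ)
    else 0

lemma det_rhoPM (x p : ℝ) : (rhoPM x p).det = 0 := by
  apply Matrix.det_eq_zero_of_row_eq_zero ((0 : Fin 2), (1 : Fin 2))
  intro j
  simp [rhoPM]

lemma spinFlip_rhoPM (x p : ℝ) : spinFlip (rhoPM x p) = rhoPM x (1 - p) := by
  unfold spinFlip sigYY pauliY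
  ext ⟨i, j⟩ ⟨k, l⟩
  fin_cases i <;> fin_cases j <;> fin_cases k <;> fin_cases l <;>
    simp [rhoPM, Matrix.mul_apply, Fintype.sum_prod_type, Fin.sum_univ_two, Prod.ext_iff,
      map_ofNat] <;> push_cast <;> ring_nf

lemma prod_rhoPM (x p : ℝ) : rhoPM x p * rhoPM x (1 - p) = Kmat x p := by
  ext ⟨i, j⟩ ⟨k, l⟩
  fin_cases i <;> fin_cases j <;> fin_cases k <;> fin_cases l <;>
    simp [rhoPM, Kmat, Matrix.mul_apply, Fintype.sum_prod_type, Fin.sum_univ_two,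
      Prod.ext_iff] <;> push_cast <;> ring_nf

lemma trace_K (x p : ℝ) : (Kmat x p).trace =
    ((2 * (p * (1 - p) + (Real.sqrt (1 - x ^ 2) / 2) ^ 2) : ℝ) : ℂ) := by
  simp [Kmat, Matrix.trace, Matrix.diag, Fintype.sum_prod_type, Fin.sum_univ_two, Prod.ext_iff]
  push_cast
  ring

lemma trace_KK (x p : ℝ) : (Kmat x p * Kmat x p).trace =
    ((2 * (p * (1 - p) + (Real.sqrt (1 - x ^ 2) / 2) ^ 2) ^ 2
      + 8 * p * (1 - p) * (Real.sqrt (1 - x ^ 2) / 2) ^ 2 : ℝ) : ℂ) := by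
  simp [Kmat, Matrix.trace, Matrix.diag, Matrix.mul_apply, Fintype.sum_prod_type,
    Fin.sum_univ_two, Prod.ext_iff]
  push_cast
  ring

lemma harmony_rhoPM (x p : ℝ) (hx : x ^ 2 ≤ 1) :
    harmony (rhoPM x p) = max 0 (4 * p * (1 - p) * (1 - x ^ 2)) := by
  have hs : Real.sqrt (1 - x ^ 2) ^ 2 = 1 - x ^ 2 := Real.sq_sqrt (by linarith)
  unfold harmony
  rw [spinFlip_rhoPM, prod_rhoPM, det_rhoPM, trace_K, trace_KK]
  simp only [Complex.ofReal_re, Complex.zero_re]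
  congr 1
  have : (Real.sqrt (1 - x ^ 2) / 2) ^ 2 = (1 - x ^ 2) / 4 := by
    rw [div_pow, hs]; norm_num
  rw [this]
  ring

/-- For `0 ≤ x ≤ 1`, the states `ρ₊`, `ρ₋` (with diagonal entries
`(1±x)/2`, `(1∓x)/2` and off-diagonal entries `√(1−x²)/2` in the `|00⟩,|11⟩` block)
and `ρ = ρ₊/2 + ρ₋/2` satisfy `H(ρ₊) = H(ρ₋) = (1−x²)²` and `H(ρ) = 1−x²`, so
`H(ρ) ≥ H(ρ₊)/2 + H(ρ₋)/2`, strictly for `0 < x < 1`: harmony is not convex. -/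
theorem harmony_not_convex (x : ℝ) (hx0 : 0 ≤ x) (hx1 : x ≤ 1)
    (ρp ρm ρ : Matrix (Fin 2 × Fin 2) (Fin 2 × Fin 2) ℂ)
    (hρp : ρp = rhoPM x ((1 + x) / 2))
    (hρm : ρm = rhoPM x ((1 - x) / 2))
    (hρ : ρ = (1 / 2 : ℂ) • ρp + (1 / 2 : ℂ) • ρm) :
    harmony ρp = (1 - x ^ 2) ^ 2 ∧
    harmony ρm = (1 - x ^ 2) ^ 2 ∧
    harmony ρ = 1 - x ^ 2 ∧
    (1 / 2) * harmony ρp + (1 / 2) * harmony ρm ≤ harmony ρ ∧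
    (0 < x → x < 1 → (1 / 2) * harmony ρp + (1 / 2) * harmony ρm < harmony ρ) := by
  have hx2 : x ^ 2 ≤ 1 := by nlinarith
  have hρ' : ρ = rhoPM x (1 / 2) := by
    rw [hρ, hρp, hρm]
    ext i j
    simp only [rhoPM, Matrix.add_apply, Matrix.smul_apply, Matrix.of_apply, smul_eq_mul]
    split_ifs <;> push_cast <;> ring
  have h1 : harmony ρp = (1 - x ^ 2) ^ 2 := by
    rw [hρp, harmony_rhoPM x _ hx2]
    rw [max_eq_right (by nlinarith)]
    ring
  have h2 : harmony ρm = (1 - x ^ 2) ^ 2 := by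
    rw [hρm, harmony_rhoPM x _ hx2]
    rw [max_eq_right (by nlinarith)]
    ring
  have h3 : harmony ρ = 1 - x ^ 2 := by
    rw [hρ', harmony_rhoPM x _ hx2]
    rw [max_eq_right (by linarith)]
    ring
  refine ⟨h1, h2, h3, ?_, ?_⟩
  · rw [h1, h2, h3]; nlinarith
  · intro hx0' hx1'
    rw [h1, h2, h3]
    nlinarith [mul_pos (show (0:ℝ) < 1 - x ^ 2 by nlinarith) (show (0:ℝ) < x ^ 2 by positivity)]
end

section
/- Let ψ ∈ ℂ²⊗ℂ²⊗ℂ² ≅ ℂ⁸ be a unit vector describing a pure state of three qubits X, Y, Z, with components ψ_{ijk} (i, j, k ∈ {0,1}). Define the reduced density matrices entrywise by (ρ_XY)_{(i,j),(i',j')} = Σ_k ψ_{ijk} ψ*_{i'j'k}, (ρ_XZ)_{(i,k),(i',k')} = Σ_j ψ_{ijk} ψ*_{i'jk'}, and (ρ_X)_{i,i'} = Σ_{j,k} ψ_{ijk} ψ*_{i'jk}. Then the monogamy inequality H(ρ_XY) + H(ρ_XZ) ≤ (4 det ρ_X)² holds, where H is the harmony of a 2-qubit density matrix. -/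
open Matrix Kronecker Complex ComplexOrder

set_option maxRecDepth 100000
set_option maxHeartbeats 2000000

def sg (p : Fin 2 × Fin 2) : ℂ := if p.1 = p.2 then -1 else 1
def fl (p : Fin 2 × Fin 2) : Fin 2 × Fin 2 := (1 - p.1, 1 - p.2)

lemma spinFlip_entry (ρ : Matrix (Fin 2 × Fin 2) (Fin 2 × Fin 2) ℂ) (p q : Fin 2 × Fin 2) :
    spinFlip ρ p q = sg p * sg q * star (ρ (fl p) (fl q)) := by
  obtain ⟨p1,p2⟩ := p; obtain ⟨q1,q2⟩ := q
  fin_cases p1 <;> fin_cases p2 <;> fin_cases q1 <;> fin_cases q2 <;>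
  · simp only [spinFlip, Matrix.mul_apply, Fintype.sum_prod_type, Fin.sum_univ_two, sigYY,
      pauliY, Matrix.kroneckerMap_apply, Matrix.map_apply, Matrix.cons_val', Matrix.cons_val_zero,
      Matrix.cons_val_one, Matrix.head_cons, Matrix.head_fin_const, Matrix.empty_val',
      Matrix.cons_val_fin_one, Matrix.of_apply, starRingEnd_apply, sg, fl]
    norm_num

/-- The reduced density matrix built from an amplitude family `v`. -/
noncomputable def rh (v : Fin 2 × Fin 2 → Fin 2 → ℂ) : Matrix (Fin 2 × Fin 2) (Fin 2 × Fin 2) ℂ :=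
  Matrix.of fun p q => ∑ k, v p k * star (v q k)

noncomputable def aq (v : Fin 2 × Fin 2 → Fin 2 → ℂ) : ℂ :=
  2*(v (0,1) 0 * v (1,0) 0 - v (0,0) 0 * v (1,1) 0)
noncomputable def bq (v : Fin 2 × Fin 2 → Fin 2 → ℂ) : ℂ :=
  v (0,1) 0 * v (1,0) 1 + v (1,0) 0 * v (0,1) 1 - v (0,0) 0 * v (1,1) 1 - v (1,1) 0 * v (0,0) 1
noncomputable def cq (v : Fin 2 × Fin 2 → Fin 2 → ℂ) : ℂ :=
  2*(v (0,1) 1 * v (1,0) 1 - v (0,0) 1 * v (1,1) 1)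
noncomputable def dq (v : Fin 2 × Fin 2 → Fin 2 → ℂ) : ℂ := aq v * cq v - bq v ^ 2
noncomputable def tq (v : Fin 2 × Fin 2 → Fin 2 → ℂ) : ℝ :=
  Complex.normSq (aq v) + 2 * Complex.normSq (bq v) + Complex.normSq (cq v)

lemma trace2 (v : Fin 2 × Fin 2 → Fin 2 → ℂ) :
    ((rh v) * spinFlip (rh v)).trace
      = aq v * star (aq v) + 2 * (bq v * star (bq v)) + cq v * star (cq v) := by
  simp only [Matrix.trace, Matrix.diag, Matrix.mul_apply, spinFlip_entry, rh, Matrix.of_apply,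
    Fintype.sum_prod_type, Fin.sum_univ_two, sg, fl, aq, bq, cq, star_mul', star_sub, star_add,
    star_star, Finset.mul_sum, Finset.sum_mul]
  norm_num
  ring

lemma trace2_re (v : Fin 2 × Fin 2 → Fin 2 → ℂ) :
    (((rh v) * spinFlip (rh v)).trace).re = tq v := by
  rw [trace2]
  simp only [Complex.star_def, Complex.mul_conj, tq]
  norm_cast

lemma trace4 (v : Fin 2 × Fin 2 → Fin 2 → ℂ) :
    ((rh v) * spinFlip (rh v) * ((rh v) * spinFlip (rh v))).trace
      = (aq v * star (aq v) + 2 * (bq v * star (bq v)) + cq v * star (cq v)) ^ 2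
        - 2 * (dq v * star (dq v)) := by
  simp only [Matrix.trace, Matrix.diag, Matrix.mul_apply, spinFlip_entry, rh, Matrix.of_apply,
    Fintype.sum_prod_type, Fin.sum_univ_two, sg, fl, aq, bq, cq, dq, star_mul', star_sub, star_add,
    star_star, star_pow, Finset.mul_sum, Finset.sum_mul]
  norm_num
  ring

lemma trace4_re (v : Fin 2 × Fin 2 → Fin 2 → ℂ) :
    (((rh v) * spinFlip (rh v) * ((rh v) * spinFlip (rh v))).trace).re
      = (tq v) ^ 2 - 2 * Complex.normSq (dq v) := by
  rw [trace4]
  simp only [Complex.star_def, Complex.mul_conj, tq]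
  norm_cast

lemma det_four (M : Matrix (Fin 4) (Fin 4) ℂ) :
    M.det =
      M 0 0 * (M 1 1 * (M 2 2 * M 3 3 - M 2 3 * M 3 2) - M 1 2 * (M 2 1 * M 3 3 - M 2 3 * M 3 1)
        + M 1 3 * (M 2 1 * M 3 2 - M 2 2 * M 3 1))
      - M 0 1 * (M 1 0 * (M 2 2 * M 3 3 - M 2 3 * M 3 2) - M 1 2 * (M 2 0 * M 3 3 - M 2 3 * M 3 0)
        + M 1 3 * (M 2 0 * M 3 2 - M 2 2 * M 3 0))
      + M 0 2 * (M 1 0 * (M 2 1 * M 3 3 - M 2 3 * M 3 1) - M 1 1 * (M 2 0 * M 3 3 - M 2 3 * M 3 0)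
        + M 1 3 * (M 2 0 * M 3 1 - M 2 1 * M 3 0))
      - M 0 3 * (M 1 0 * (M 2 1 * M 3 2 - M 2 2 * M 3 1) - M 1 1 * (M 2 0 * M 3 2 - M 2 2 * M 3 0)
        + M 1 2 * (M 2 0 * M 3 1 - M 2 1 * M 3 0)) := by
  rw [Matrix.det_succ_row_zero, Fin.sum_univ_four]
  norm_num [Matrix.det_fin_three, Fin.succAbove, Matrix.submatrix_apply, Fin.lt_def,
    show (Fin.succ 2 : Fin 4) = 3 from rfl, show (Fin.castSucc 2 : Fin 4) = 2 from rfl,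
    show ((3:Fin 4):ℕ) = 3 from rfl, show ((2:Fin 4):ℕ) = 2 from rfl,
    show ((1:Fin 4):ℕ) = 1 from rfl, show ((0:Fin 4):ℕ) = 0 from rfl]
  ring

def e4 : Fin 4 ≃ Fin 2 × Fin 2 where
  toFun := ![(0,0),(0,1),(1,0),(1,1)]
  invFun p := ![![0,1],![2,3]] p.1 p.2
  left_inv := by decide
  right_inv := by decide

lemma det_rh (v : Fin 2 × Fin 2 → Fin 2 → ℂ) : (rh v).det = 0 := by
  rw [← Matrix.det_submatrix_equiv_self e4, det_four]
  simp only [Matrix.submatrix_apply, e4, Equiv.coe_fn_mk, rh, Matrix.of_apply, Fin.sum_univ_two,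
    Matrix.cons_val', Matrix.cons_val_zero, Matrix.cons_val_one, Matrix.head_cons,
    Matrix.head_fin_const, Matrix.empty_val', Matrix.cons_val_fin_one,
    Matrix.cons_val_two, Matrix.cons_val_three, Matrix.tail_cons]
  ring

lemma tq_nonneg (v : Fin 2 × Fin 2 → Fin 2 → ℂ) : 0 ≤ tq v := by
  have := Complex.normSq_nonneg (aq v)
  have := Complex.normSq_nonneg (bq v)
  have := Complex.normSq_nonneg (cq v)
  simp only [tq]; positivity

lemma harmony_rh_le (v : Fin 2 × Fin 2 → Fin 2 → ℂ) : harmony (rh v) ≤ (tq v) ^ 2 := by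
  rw [harmony, trace2_re, trace4_re, det_rh]
  have hd := Complex.normSq_nonneg (dq v)
  have ht := tq_nonneg v
  apply max_le (by positivity)
  simp only [Complex.zero_re]
  nlinarith

/-- The key link identity: the two spin-flip traces add up to `4 det ρ_X`. -/
lemma link (ψ : Fin 2 × Fin 2 × Fin 2 → ℂ)
    (ρX : Matrix (Fin 2) (Fin 2) ℂ)
    (hρX : ρX = Matrix.of fun i i' => ∑ j, ∑ k, ψ (i, j, k) * star (ψ (i', j, k))) :
    ((rh (fun p k => ψ (p.1, p.2, k))) * spinFlip (rh (fun p k => ψ (p.1, p.2, k)))).trace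
      + ((rh (fun p k => ψ (p.1, k, p.2))) * spinFlip (rh (fun p k => ψ (p.1, k, p.2)))).trace
      = 4 * ρX.det := by
  rw [trace2, trace2, hρX, Matrix.det_fin_two]
  simp only [aq, bq, cq, Matrix.of_apply, Fin.sum_univ_two, star_mul', star_sub, star_add,
    star_star]
  norm_num
  ring

/-- For a pure 3-qubit state `ψ` (a unit vector in `ℂ²⊗ℂ²⊗ℂ² ≅ ℂ⁸`)
with reduced density matrices `ρ_XY`, `ρ_XZ`, `ρ_X` given by partial traces, the
monogamy inequality `H(ρ_XY) + H(ρ_XZ) ≤ (4 det ρ_X)²` holds. -/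
theorem harmony_monogamy (ψ : Fin 2 × Fin 2 × Fin 2 → ℂ)
    (hψ : ∑ p, Complex.normSq (ψ p) = 1)
    (ρXY : Matrix (Fin 2 × Fin 2) (Fin 2 × Fin 2) ℂ)
    (hρXY : ρXY = Matrix.of fun p q => ∑ k, ψ (p.1, p.2, k) * star (ψ (q.1, q.2, k)))
    (ρXZ : Matrix (Fin 2 × Fin 2) (Fin 2 × Fin 2) ℂ)
    (hρXZ : ρXZ = Matrix.of fun p q => ∑ j, ψ (p.1, j, p.2) * star (ψ (q.1, j, q.2)))
    (ρX : Matrix (Fin 2) (Fin 2) ℂ)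
    (hρX : ρX = Matrix.of fun i i' => ∑ j, ∑ k, ψ (i, j, k) * star (ψ (i', j, k))) :
    harmony ρXY + harmony ρXZ ≤ (4 * ρX.det.re) ^ 2 := by
  set v1 : Fin 2 × Fin 2 → Fin 2 → ℂ := fun p k => ψ (p.1, p.2, k) with hv1
  set v2 : Fin 2 × Fin 2 → Fin 2 → ℂ := fun p k => ψ (p.1, k, p.2) with hv2
  have h1 : ρXY = rh v1 := hρXY
  have h2 : ρXZ = rh v2 := hρXZ
  have hlink := link ψ ρX hρX
  have hre : tq v1 + tq v2 = 4 * ρX.det.re := by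
    have := congrArg Complex.re hlink
    simpa [trace2_re] using this
  have ha := harmony_rh_le v1
  have hb := harmony_rh_le v2
  have ht1 := tq_nonneg v1
  have ht2 := tq_nonneg v2
  rw [h1, h2]
  nlinarith [sq_nonneg (tq v1 + tq v2)]
end

section
/- Let λ1 ≥ λ2 ≥ λ3 ≥ λ4 ≥ 0 be real numbers with λ1 + λ2 + λ3 + λ4 ≤ 1, let C = max{0, λ1−λ2−λ3−λ4}, and suppose C > 0. If the harmony H = max{0, −D} attains the value C(2+C)³/27, then λ1 + λ2 + λ3 + λ4 = 1. -/
/-- With `λ1 ≥ λ2 ≥ λ3 ≥ λ4 ≥ 0`, `λ1+λ2+λ3+λ4 ≤ 1`,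
`C = max{0, λ1−λ2−λ3−λ4} > 0`, `H = max{0, −D}`: if `H = C(2+C)³/27` then
`λ1 + λ2 + λ3 + λ4 = 1`. -/
theorem sum_eq_one_of_harmony_maximal (l1 l2 l3 l4 : ℝ)
    (h12 : l2 ≤ l1) (h23 : l3 ≤ l2) (h34 : l4 ≤ l3) (h4 : 0 ≤ l4)
    (hsum : l1 + l2 + l3 + l4 ≤ 1)
    (C D H : ℝ)
    (hC : C = max 0 (l1 - l2 - l3 - l4))
    (hCpos : 0 < C)
    (hD : D = (-l1 + l2 + l3 + l4) * (l1 - l2 + l3 + l4) * (l1 + l2 - l3 + l4)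
      * (l1 + l2 + l3 - l4))
    (hH : H = max 0 (-D))
    (hmax : H = C * (2 + C) ^ 3 / 27) :
    l1 + l2 + l3 + l4 = 1 := by
  have hx : 0 < l1 - l2 - l3 - l4 := by
    rcases le_or_gt (l1 - l2 - l3 - l4) 0 with h | h
    · rw [hC, max_eq_left h] at hCpos; linarith
    · exact h
  have hC' : C = l1 - l2 - l3 - l4 := by rw [hC, max_eq_right hx.le]
  set a := l1 - l2 + l3 + l4 with ha
  set b := l1 + l2 - l3 + l4 with hb
  set c := l1 + l2 + l3 - l4 with hc
  have haC : C ≤ a := by rw [hC']; simp only [ha]; linarith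
  have hbC : C ≤ b := by rw [hC']; simp only [hb]; linarith
  have hcC : C ≤ c := by rw [hC']; simp only [hc]; linarith
  have hapos : 0 < a := lt_of_lt_of_le hCpos haC
  have hbpos : 0 < b := lt_of_lt_of_le hCpos hbC
  have hcpos : 0 < c := lt_of_lt_of_le hCpos hcC
  have hD' : -D = C * (a * b * c) := by rw [hD, hC']; ring
  have hDpos : 0 ≤ -D := by
    rw [hD']
    exact le_of_lt (mul_pos hCpos (mul_pos (mul_pos hapos hbpos) hcpos))
  have hH' : H = C * (a * b * c) := by rw [hH, max_eq_right hDpos, hD']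
  have key : 27 * (a * b * c) = (2 + C) ^ 3 := by
    have heq := hH'.symm.trans hmax
    have h27 : C * (27 * (a * b * c)) = C * ((2 + C) ^ 3) := by
      field_simp at heq; linarith
    have := mul_left_cancel₀ (ne_of_gt hCpos) h27
    linarith
  have hsum3 : a + b + c = 2 * (l1 + l2 + l3 + l4) + C := by rw [hC']; ring
  -- AM-GM: 27 * a*b*c ≤ (a+b+c)^3
  have amgm : 27 * (a * b * c) ≤ (a + b + c) ^ 3 := by
    nlinarith [sq_nonneg (a - b), sq_nonneg (b - c), sq_nonneg (a - c),
      mul_pos hapos hbpos, mul_pos hbpos hcpos, mul_pos hapos hcpos,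
      sq_nonneg (a + b - 2*c), sq_nonneg (b + c - 2*a), sq_nonneg (a + c - 2*b)]
  by_contra hne
  have hlt : l1 + l2 + l3 + l4 < 1 := lt_of_le_of_ne hsum hne
  have h1 : a + b + c < 2 + C := by rw [hsum3]; linarith
  have h2 : (a + b + c) ^ 3 < (2 + C) ^ 3 := by
    apply pow_lt_pow_left₀ h1 (by positivity) (by norm_num)
  linarith [amgm, h2, key]
end

section
/- Let ψ = (a, c, d, b) ∈ ℂ⁴ be a unit vector representing the pure 2-qubit state a|00⟩ + c|01⟩ + d|10⟩ + b|11⟩, let ρ = ψψ†, and let ρ_A be the 2×2 reduced density matrix with entries (ρ_A)_{i,i'} = Σ_j ψ_{ij} ψ*_{i'j}. Then the concurrence C(ρ) = √(4 det ρ_A) equals the fourth root of the harmony: C(ρ) = H(ρ)^{1/4}, i.e., (4 det ρ_A)² = H(ρ). -/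
open Matrix Kronecker Complex ComplexOrder

section helpers
variable {n : Type*} [Fintype n] [DecidableEq n]

lemma vmv_mul_vmv (u v w x : n → ℂ) :
    vecMulVec u v * vecMulVec w x = (v ⬝ᵥ w) • vecMulVec u x := by
  ext i j
  simp [Matrix.mul_apply, vecMulVec_apply, dotProduct, Finset.sum_mul, Finset.mul_sum]
  congr 1; ext k; ring

lemma trace_vmv (u v : n → ℂ) : (vecMulVec u v).trace = u ⬝ᵥ v := by
  simp [Matrix.trace, vecMulVec_apply, dotProduct, Matrix.diag]

lemma mul_vmv (A : Matrix n n ℂ) (w v : n → ℂ) :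
    A * vecMulVec w v = vecMulVec (A *ᵥ w) v := by
  ext i j
  simp [Matrix.mul_apply, vecMulVec_apply, Matrix.mulVec, dotProduct, Finset.sum_mul]
  congr 1; ext k; ring

lemma vmv_mul (A : Matrix n n ℂ) (w v : n → ℂ) :
    vecMulVec w v * A = vecMulVec w (v ᵥ* A) := by
  ext i j
  simp [Matrix.mul_apply, vecMulVec_apply, Matrix.vecMul, dotProduct, Finset.mul_sum]
  congr 1; ext k; ring

lemma vmv_map_conj (u v : n → ℂ) :
    (vecMulVec u v).map (starRingEnd ℂ) = vecMulVec (star u) (star v) := by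
  ext i j
  simp [vecMulVec_apply]

lemma det_vmv4 (u v : Fin 4 → ℂ) : (vecMulVec u v).det = 0 := by
  rw [Matrix.det_succ_row_zero]
  simp [Fin.sum_univ_succ, Matrix.det_succ_row_zero, vecMulVec_apply,
    Matrix.submatrix_apply, Matrix.det_fin_two]
  ring

end helpers

/-- For a pure 2-qubit state `ψ = a|00⟩ + c|01⟩ + d|10⟩ + b|11⟩`
(a unit vector) with `ρ = ψψ†` and reduced density matrix
`(ρ_A)_{i,i'} = Σ_j ψ_{ij} ψ*_{i'j}`, the concurrence `C(ρ) = √(4 det ρ_A)` is the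
fourth root of the harmony, i.e. `(4 det ρ_A)² = H(ρ)`. -/
theorem concurrence_eq_harmony_pow_quarter (a b c d : ℂ)
    (hunit : Complex.normSq a + Complex.normSq b + Complex.normSq c
      + Complex.normSq d = 1)
    (ψ : Fin 2 × Fin 2 → ℂ) (hψ : ψ = fun p => !![a, c; d, b] p.1 p.2)
    (ρ : Matrix (Fin 2 × Fin 2) (Fin 2 × Fin 2) ℂ)
    (hρ : ρ = Matrix.vecMulVec ψ (star ψ))
    (ρA : Matrix (Fin 2) (Fin 2) ℂ)
    (hρA : ρA = Matrix.of fun i i' => ∑ j, ψ (i, j) * star (ψ (i', j))) :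
    (4 * ρA.det) ^ 2 = (harmony ρ : ℂ) := by
  set K : ℂ := a * b - c * d with hK
  -- spinFlip of rank one
  have hsf : spinFlip ρ = vecMulVec (sigYY *ᵥ star ψ) (ψ ᵥ* sigYY) := by
    rw [hρ, spinFlip, vmv_map_conj, star_star, mul_vmv, vmv_mul]
  -- scalars
  have hs : star ψ ⬝ᵥ (sigYY *ᵥ star ψ) = -2 * (starRingEnd ℂ) K := by
    subst hψ
    simp [dotProduct, Matrix.mulVec, sigYY, pauliY, kroneckerMap_apply,
      Fintype.sum_prod_type, Fin.sum_univ_two, hK, map_sub, _root_.map_mul]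
    ring
  have ht : (ψ ᵥ* sigYY) ⬝ᵥ ψ = -2 * K := by
    subst hψ
    simp [dotProduct, Matrix.vecMul, sigYY, pauliY, kroneckerMap_apply,
      Fintype.sum_prod_type, Fin.sum_univ_two, hK]
    ring
  have hMM : ρ * spinFlip ρ =
      (star ψ ⬝ᵥ (sigYY *ᵥ star ψ)) • vecMulVec ψ (ψ ᵥ* sigYY) := by
    rw [hsf, hρ, vmv_mul_vmv]
  have htr1 : (ρ * spinFlip ρ).trace = ((4 * Complex.normSq K : ℝ) : ℂ) := by
    rw [hMM, Matrix.trace_smul, trace_vmv, hs]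
    rw [show ψ ⬝ᵥ (ψ ᵥ* sigYY) = (ψ ᵥ* sigYY) ⬝ᵥ ψ from dotProduct_comm _ _, ht]
    push_cast [smul_eq_mul, Complex.normSq_eq_conj_mul_self]
    ring
  have htr2 : (ρ * spinFlip ρ * (ρ * spinFlip ρ)).trace
      = (((4 * Complex.normSq K) ^ 2 : ℝ) : ℂ) := by
    rw [hMM, Matrix.smul_mul, Matrix.mul_smul, vmv_mul_vmv]
    rw [Matrix.trace_smul, Matrix.trace_smul, Matrix.trace_smul, trace_vmv]
    rw [show ψ ⬝ᵥ (ψ ᵥ* sigYY) = (ψ ᵥ* sigYY) ⬝ᵥ ψ from dotProduct_comm _ _, hs, ht]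
    push_cast [smul_eq_mul, Complex.normSq_eq_conj_mul_self]
    ring
  have hdet : ρ.det = 0 := by
    rw [hρ, ← Matrix.det_reindex_self finProdFinEquiv]
    rw [show (Matrix.reindex finProdFinEquiv finProdFinEquiv) (vecMulVec ψ (star ψ))
        = vecMulVec (ψ ∘ finProdFinEquiv.symm) ((star ψ) ∘ finProdFinEquiv.symm) by
      ext i j; simp [vecMulVec_apply]]
    exact det_vmv4 _ _
  have hdetA : ρA.det = ((starRingEnd ℂ) K) * K := by
    subst hψ
    rw [hρA, Matrix.det_fin_two]
    simp [Fin.sum_univ_two, hK, map_sub, _root_.map_mul]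
    ring
  have hre2 : ((ρ * spinFlip ρ * (ρ * spinFlip ρ)).trace).re
      = (4 * Complex.normSq K) ^ 2 := by rw [htr2, Complex.ofReal_re]
  have hre1 : ((ρ * spinFlip ρ).trace).re = 4 * Complex.normSq K := by
    rw [htr1, Complex.ofReal_re]
  have hre0 : ρ.det.re = 0 := by rw [hdet]; rfl
  rw [harmony, hre1, hre2, hre0]
  rw [max_eq_right (by nlinarith [sq_nonneg (4 * Complex.normSq K)])]
  rw [hdetA]
  push_cast [Complex.normSq_eq_conj_mul_self]
  ring
end
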